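/- Let E be a real inner product space and n ∈ E a unit vector. For x ∈ E, write x_n = ⟪x, n⟫ (normal component) and x_τ = x − ⟪x, n⟫ • n (tangential part). For g ≥ 0 let C(n,g) = {x ∈ E : x_n ≥ 0 and ‖x_τ‖ ≤ g}. Then for all λ, j ∈ E the following are equivalent: (i) λ ∈ C(n,g) and ⟪μ − λ, j⟫ ≤ 0 for all μ ∈ C(n,g); (ii) λ_n ≥ 0, j_n ≤ 0, λ_n · j_n = 0, ‖λ_τ‖ ≤ g, and ⟪λ_τ, j_τ⟫ = g‖j_τ‖. -/

import Mathlib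

open scoped RealInnerProductSpace

/-- Facewise decoupling of the discrete variational inequality: membership of
`λ` in the Tresca admissible set `C(n,g)` together with the variational
inequality `⟪μ - λ, j⟫ ≤ 0` for all `μ ∈ C(n,g)` is equivalent to the
Signorini complementarity conditions and the Tresca friction conditions. -/
theorem tresca_variational_inequality_iff_complementarity
    {E : Type*} [NormedAddCommGroup E] [InnerProductSpace ℝ E]
    (n : E) (hn : ‖n‖ = 1) (g : ℝ) (hg : 0 ≤ g) (lam j : E) :
    ((0 ≤ ⟪lam, n⟫ ∧ ‖lam - ⟪lam, n⟫ • n‖ ≤ g) ∧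
        ∀ μ : E, (0 ≤ ⟪μ, n⟫ ∧ ‖μ - ⟪μ, n⟫ • n‖ ≤ g) → ⟪μ - lam, j⟫ ≤ 0) ↔
      (0 ≤ ⟪lam, n⟫ ∧ ⟪j, n⟫ ≤ 0 ∧ ⟪lam, n⟫ * ⟪j, n⟫ = 0 ∧
        ‖lam - ⟪lam, n⟫ • n‖ ≤ g ∧
        ⟪lam - ⟪lam, n⟫ • n, j - ⟪j, n⟫ • n⟫ = g * ‖j - ⟪j, n⟫ • n‖) := by
  have hnn : ⟪n, n⟫ = (1:ℝ) := by
    rw [real_inner_self_eq_norm_sq, hn]; norm_num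
  have tangn : ∀ x : E, ⟪x - ⟪x, n⟫ • n, n⟫ = 0 := by
    intro x
    simp [inner_sub_left, real_inner_smul_left, hnn, hn]
  have key : ∀ x y : E,
      ⟪x - ⟪x, n⟫ • n, y - ⟪y, n⟫ • n⟫ = ⟪x, y⟫ - ⟪x, n⟫ * ⟪y, n⟫ := by
    intro x y
    simp only [inner_sub_left, inner_sub_right, real_inner_smul_left,
      real_inner_smul_right, hnn, real_inner_comm n y]
    ring
  constructor
  · rintro ⟨⟨hln, hlt⟩, hVI⟩
    have hjn : ⟪j, n⟫ ≤ 0 := by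
      have := hVI (lam + n) ⟨by
        rw [inner_add_left, hnn]; linarith, by
        have : lam + n - ⟪lam + n, n⟫ • n = lam - ⟪lam, n⟫ • n := by
          rw [inner_add_left, hnn]
          module
        rw [this]; exact hlt⟩
      have h2 : ⟪lam + n - lam, j⟫ = ⟪j, n⟫ := by
        simp [real_inner_comm]
      linarith [h2 ▸ this]
    have hcomp : ⟪lam, n⟫ * ⟪j, n⟫ = 0 := by
      have hμ : (0:ℝ) ≤ ⟪lam - ⟪lam, n⟫ • n, n⟫ := by rw [tangn]
      have hμt : ‖lam - ⟪lam, n⟫ • n - ⟪lam - ⟪lam, n⟫ • n, n⟫ • n‖ ≤ g := by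
        rw [tangn]; simpa using hlt
      have := hVI _ ⟨hμ, hμt⟩
      have h2 : ⟪lam - ⟪lam, n⟫ • n - lam, j⟫ = -(⟪lam, n⟫ * ⟪j, n⟫) := by
        have : lam - ⟪lam, n⟫ • n - lam = -(⟪lam, n⟫ • n) := by module
        rw [this, inner_neg_left, real_inner_smul_left, real_inner_comm n j]
      have hge : 0 ≤ ⟪lam, n⟫ * ⟪j, n⟫ := by
        rw [h2] at this; linarith
      have hle : ⟪lam, n⟫ * ⟪j, n⟫ ≤ 0 := mul_nonpos_of_nonneg_of_nonpos hln hjn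
      linarith
    refine ⟨hln, hjn, hcomp, hlt, ?_⟩
    by_cases hjt : j - ⟪j, n⟫ • n = 0
    · simp [hjt]
    · set t := j - ⟪j, n⟫ • n with ht
      have htn : ⟪t, n⟫ = 0 := tangn j
      have htnorm : 0 < ‖t‖ := norm_pos_iff.mpr hjt
      set μ := ⟪lam, n⟫ • n + (g / ‖t‖) • t with hμdef
      have hμn : ⟪μ, n⟫ = ⟪lam, n⟫ := by
        rw [hμdef, inner_add_left, real_inner_smul_left, real_inner_smul_left, htn, hnn]
        ring
      have hμtau : μ - ⟪μ, n⟫ • n = (g / ‖t‖) • t := by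
        rw [hμn, hμdef]; module
      have hμadm : (0 ≤ ⟪μ, n⟫ ∧ ‖μ - ⟪μ, n⟫ • n‖ ≤ g) := by
        refine ⟨by rw [hμn]; exact hln, ?_⟩
        rw [hμtau, norm_smul]
        rw [Real.norm_eq_abs, abs_div, abs_of_nonneg hg, abs_of_nonneg (norm_nonneg t)]
        field_simp
        exact le_rfl
      have hVIμ := hVI μ hμadm
      have hcalc : ⟪μ - lam, j⟫ = g * ‖t‖ - ⟪lam - ⟪lam, n⟫ • n, t⟫ := by
        have hd : μ - lam = (g / ‖t‖) • t - (lam - ⟪lam, n⟫ • n) := by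
          rw [hμdef]; module
        have hj : j = t + ⟪j, n⟫ • n := by rw [ht]; module
        rw [hd, hj]
        simp only [inner_add_right, inner_sub_left, real_inner_smul_left,
          real_inner_smul_right, htn, hnn, real_inner_self_eq_norm_sq]
        field_simp
        ring
      have hub : ⟪lam - ⟪lam, n⟫ • n, t⟫ ≤ g * ‖t‖ := by
        calc ⟪lam - ⟪lam, n⟫ • n, t⟫ ≤ ‖lam - ⟪lam, n⟫ • n‖ * ‖t‖ :=
              real_inner_le_norm _ _
          _ ≤ g * ‖t‖ := by
              exact mul_le_mul_of_nonneg_right hlt (norm_nonneg t)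
      have hlb : g * ‖t‖ ≤ ⟪lam - ⟪lam, n⟫ • n, t⟫ := by
        rw [hcalc] at hVIμ; linarith
      linarith
  · rintro ⟨hln, hjn, hcomp, hlt, hfric⟩
    refine ⟨⟨hln, hlt⟩, ?_⟩
    rintro μ ⟨hμn, hμt⟩
    have e1 : ⟪μ - lam, j⟫ = (⟪μ, n⟫ - ⟪lam, n⟫) * ⟪j, n⟫ +
        (⟪μ - ⟪μ, n⟫ • n, j - ⟪j, n⟫ • n⟫ - ⟪lam - ⟪lam, n⟫ • n, j - ⟪j, n⟫ • n⟫) := by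
      rw [key μ j, key lam j, inner_sub_left]
      ring
    have h1 : ⟪μ, n⟫ * ⟪j, n⟫ ≤ 0 := mul_nonpos_of_nonneg_of_nonpos hμn hjn
    have h2 : ⟪μ - ⟪μ, n⟫ • n, j - ⟪j, n⟫ • n⟫ ≤ g * ‖j - ⟪j, n⟫ • n‖ := by
      calc ⟪μ - ⟪μ, n⟫ • n, j - ⟪j, n⟫ • n⟫
          ≤ ‖μ - ⟪μ, n⟫ • n‖ * ‖j - ⟪j, n⟫ • n‖ := real_inner_le_norm _ _
        _ ≤ g * ‖j - ⟪j, n⟫ • n‖ :=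
            mul_le_mul_of_nonneg_right hμt (norm_nonneg _)
    rw [e1, hfric]
    nlinarith
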